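/- Let G be a finite connected simple graph and let x, y be vertices of G. Then x ~ y (no single edge deletion separates x from y) if and only if there exist two edge-disjoint paths in G from x to y. -/

import Mathlib

open SimpleGraph

namespace TwoEdgeDisjointAux

variable {V : Type*} {G : SimpleGraph V}

/-- Decompose a walk of positive length as `q.concat h`. -/
lemma exists_eq_concat {x y : V} (p : G.Walk x y) (hp : p.length ≠ 0) :
    ∃ (z : V) (q : G.Walk x z) (h : G.Adj z y), p = q.concat h := by
  have hnn : ¬ p.reverse.Nil := by
    rw [Walk.nil_iff_length_eq, Walk.length_reverse]; exact hp
  obtain ⟨z, h, t, ht⟩ := Walk.not_nil_iff.mp hnn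
  refine ⟨z, t.reverse, h.symm, ?_⟩
  have := congrArg Walk.reverse ht
  rwa [Walk.reverse_reverse, Walk.reverse_cons] at this

/-- In a path `P` from `x` to `z` containing `y ≠ z`, the prefix up to the
first occurrence of `y` avoids the edge `s(z,y)`. -/
lemma takeUntil_not_mem_end_edge [DecidableEq V] {x z y : V} {P : G.Walk x z} (hP : P.IsPath)
    (hy : y ∈ P.support) (hyz : y ≠ z) : s(z, y) ∉ (P.takeUntil y hy).edges := by
  intro he
  have hzT : z ∈ (P.takeUntil y hy).support :=
    Walk.fst_mem_support_of_mem_edges _ he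
  have hzD : z ∈ (P.dropUntil y hy).support.tail := by
    have hz : z ∈ (P.dropUntil y hy).support := Walk.end_mem_support _
    rw [(P.dropUntil y hy).support_eq_cons, List.mem_cons] at hz
    rcases hz with hz | hz
    · exact absurd hz.symm hyz
    · exact hz
  have hsupp : P.support = (P.takeUntil y hy).support ++ (P.dropUntil y hy).support.tail := by
    conv_lhs => rw [← P.take_spec hy]
    exact Walk.support_append _ _
  have hnodup := hP.support_nodup
  rw [hsupp, List.nodup_append] at hnodup
  exact hnodup.2.2 z hzT z hzD rfl

/-- Given a walk `Q` meeting a set `S`, there is a final segment `R` of `Q`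
starting at the last vertex `w` of `Q` lying in `S`. -/
lemma exists_last_in_set {x y : V} (Q : G.Walk x y) (S : Set V)
    (hS : ∃ v ∈ Q.support, v ∈ S) :
    ∃ w, w ∈ S ∧ ∃ R : G.Walk w y, (∀ e ∈ R.edges, e ∈ Q.edges) ∧
      ∀ v ∈ R.support, v ∈ S → v = w := by
  classical
  induction Q with
  | nil =>
    obtain ⟨v, hv, hvS⟩ := hS
    rw [Walk.mem_support_nil_iff] at hv
    subst hv
    exact ⟨v, hvS, Walk.nil, by simp, by
      intro u hu _
      rwa [Walk.mem_support_nil_iff] at hu⟩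
  | @cons a b c h q ih =>
    by_cases hq : ∃ v ∈ q.support, v ∈ S
    · obtain ⟨w, hwS, R, hRe, hRs⟩ := ih hq
      exact ⟨w, hwS, R, fun e he => by simp [hRe e he], hRs⟩
    · have haS : a ∈ S := by
        obtain ⟨v, hv, hvS⟩ := hS
        rw [Walk.support_cons, List.mem_cons] at hv
        rcases hv with rfl | hv
        · exact hvS
        · exact absurd ⟨v, hv, hvS⟩ hq
      refine ⟨a, haS, Walk.cons h q, fun e he => he, ?_⟩
      intro v hv hvS
      rw [Walk.support_cons, List.mem_cons] at hv
      rcases hv with rfl | hv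
      · rfl
      · exact absurd ⟨v, hv, hvS⟩ hq

/-- The key construction: from two edge-disjoint `x`–`z` walks `P1, P2` avoiding `y`,
an edge `z ~ y`, and a suitable tail walk `R` from `w ∈ P1` to `y`, build two
edge-disjoint `x`–`y` walks. -/
lemma build [DecidableEq V] {x z y : V} (P1 P2 : G.Walk x z)
    (hdisj : ∀ e ∈ P1.edges, e ∉ P2.edges)
    (hzy : G.Adj z y) (hy1 : y ∉ P1.support)
    {w : V} (hw : w ∈ P1.support) (R : G.Walk w y)
    (hRzy : s(z, y) ∉ R.edges)
    (hRs : ∀ v ∈ R.support, (v ∈ P1.support ∨ v ∈ P2.support) → v = w) :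
    ∃ W1 W2 : G.Walk x y, ∀ e ∈ W1.edges, e ∉ W2.edges := by
  refine ⟨(P1.takeUntil w hw).append R, P2.concat hzy, ?_⟩
  intro e he1 he2
  rw [Walk.edges_append, List.mem_append] at he1
  rw [Walk.edges_concat, List.concat_eq_append, List.mem_append, List.mem_singleton] at he2
  rcases he1 with he1 | he1
  · have heP1 : e ∈ P1.edges := Walk.edges_takeUntil_subset _ _ he1
    rcases he2 with he2 | rfl
    · exact hdisj e heP1 he2
    · exact hy1 (Walk.snd_mem_support_of_mem_edges _ heP1)
  · rcases he2 with he2 | rfl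
    · -- e is an edge of both R and P2; both endpoints would have to be w
      revert he1 he2
      induction e using Sym2.ind with
      | _ a b =>
        intro he1 he2
        have haR : a ∈ R.support := Walk.fst_mem_support_of_mem_edges _ he1
        have hbR : b ∈ R.support := Walk.snd_mem_support_of_mem_edges _ he1
        have haP : a ∈ P2.support := Walk.fst_mem_support_of_mem_edges _ he2
        have hbP : b ∈ P2.support := Walk.snd_mem_support_of_mem_edges _ he2
        have ha : a = w := hRs a haR (Or.inr haP)
        have hb : b = w := hRs b hbR (Or.inr hbP)
        have hadj : G.Adj a b := Walk.adj_of_mem_edges _ he2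
        exact hadj.ne (ha.trans hb.symm)
    · exact hRzy he1

variable [Fintype V]

/-- Main inductive lemma: walks version. -/
lemma key (G : SimpleGraph V) (hG : G.Connected) :
    ∀ n (x y : V), G.dist x y ≤ n →
      (∀ e ∈ G.edgeSet, (G.deleteEdges {e}).Reachable x y) →
      ∃ W1 W2 : G.Walk x y, ∀ e ∈ W1.edges, e ∉ W2.edges := by
  classical
  intro n
  induction n with
  | zero =>
    intro x y hd _
    have hxy : x = y := (hG.dist_eq_zero_iff).mp (Nat.le_zero.mp hd)
    subst hxy
    exact ⟨Walk.nil, Walk.nil, by simp⟩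
  | succ n ih =>
    intro x y hdist hyp
    rcases eq_or_ne x y with rfl | hne
    · exact ⟨Walk.nil, Walk.nil, by simp⟩
    obtain ⟨p, hp, hlen⟩ := hG.exists_path_of_dist x y
    have hlen0 : p.length ≠ 0 := fun h => hne (Walk.eq_of_length_eq_zero h)
    obtain ⟨z, q, hzy, rfl⟩ := exists_eq_concat p hlen0
    have hqpath : q.IsPath := by
      rw [Walk.concat_eq_append] at hp
      exact hp.of_append_left
    have hysupp : y ∉ q.support := by
      have hnodup := hp.support_nodup
      rw [Walk.support_concat, List.nodup_append] at hnodup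
      intro hy
      exact hnodup.2.2 y hy y (List.mem_singleton_self y) rfl
    have hqlen : q.length ≤ n := by
      have h1 : q.length + 1 = G.dist x y := by
        rw [← hlen, Walk.length_concat]
      omega
    have hdistxz : G.dist x z ≤ n := le_trans (dist_le q) hqlen
    -- hypothesis transfers from (x, y) to (x, z)
    have hypxz : ∀ e ∈ G.edgeSet, (G.deleteEdges {e}).Reachable x z := by
      intro e he
      by_cases hezy : e = s(z, y)
      · subst hezy
        refine ⟨q.transfer _ fun f hf => ?_⟩
        rw [edgeSet_deleteEdges]
        refine ⟨q.edges_subset_edgeSet hf, ?_⟩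
        simp only [Set.mem_singleton_iff]
        intro hfe
        subst hfe
        exact hysupp (Walk.snd_mem_support_of_mem_edges _ hf)
      · have hr := hyp e he
        have hadj : (G.deleteEdges {e}).Adj y z := by
          rw [deleteEdges_adj]
          refine ⟨hzy.symm, ?_⟩
          simp only [Set.mem_singleton_iff]
          intro hh
          exact hezy (by rw [← hh, Sym2.eq_swap])
        exact hr.trans hadj.reachable
    obtain ⟨W1', W2', hdisj'⟩ := ih x z hdistxz hypxz
    set P1 := W1'.bypass with hP1
    set P2 := W2'.bypass with hP2
    have hP1path : P1.IsPath := Walk.bypass_isPath _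
    have hP2path : P2.IsPath := Walk.bypass_isPath _
    have hdisj : ∀ e ∈ P1.edges, e ∉ P2.edges := fun e he1 he2 =>
      hdisj' e (Walk.edges_bypass_subset _ he1) (Walk.edges_bypass_subset _ he2)
    have hyz : y ≠ z := hzy.ne'
    by_cases hy1 : y ∈ P1.support
    · refine ⟨P1.takeUntil y hy1, P2.concat hzy, ?_⟩
      intro e he1 he2
      rw [Walk.edges_concat, List.concat_eq_append, List.mem_append,
        List.mem_singleton] at he2
      rcases he2 with he2 | rfl
      · exact hdisj e (Walk.edges_takeUntil_subset _ _ he1) he2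
      · exact takeUntil_not_mem_end_edge hP1path hy1 hyz he1
    by_cases hy2 : y ∈ P2.support
    · refine ⟨P2.takeUntil y hy2, P1.concat hzy, ?_⟩
      intro e he1 he2
      rw [Walk.edges_concat, List.concat_eq_append, List.mem_append,
        List.mem_singleton] at he2
      rcases he2 with he2 | rfl
      · exact hdisj e he2 (Walk.edges_takeUntil_subset _ _ he1)
      · exact takeUntil_not_mem_end_edge hP2path hy2 hyz he1
    -- y is on neither P1 nor P2; use a path avoiding the edge zy
    have hzyE : s(z, y) ∈ G.edgeSet := hzy
    obtain ⟨Q'⟩ := hyp s(z, y) hzyE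
    have hQ'sub : ∀ f ∈ Q'.edges, f ∈ G.edgeSet := by
      intro f hf
      have := Q'.edges_subset_edgeSet hf
      rw [edgeSet_deleteEdges] at this
      exact this.1
    set Q := Q'.transfer G hQ'sub with hQdef
    have hQedges : Q.edges = Q'.edges := Walk.edges_transfer _ _
    have hQzy : ∀ f ∈ Q.edges, f ≠ s(z, y) := by
      intro f hf
      rw [hQedges] at hf
      have := Q'.edges_subset_edgeSet hf
      rw [edgeSet_deleteEdges] at this
      simpa using this.2
    have hstart : ∃ v ∈ Q.support, v ∈ {v | v ∈ P1.support ∨ v ∈ P2.support} := by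
      exact ⟨x, Walk.start_mem_support _, Or.inl (Walk.start_mem_support _)⟩
    obtain ⟨w, hwS, R, hRe, hRs⟩ :=
      exists_last_in_set Q {v | v ∈ P1.support ∨ v ∈ P2.support} hstart
    have hRzy : s(z, y) ∉ R.edges := fun h => hQzy _ (hRe _ h) rfl
    rcases hwS with hw1 | hw2
    · exact build P1 P2 hdisj hzy hy1 hw1 R hRzy hRs
    · refine build P2 P1 (fun e he1 he2 => hdisj e he2 he1) hzy hy2 hw2 R hRzy ?_
      intro v hv hvS
      exact hRs v hv (hvS.symm)

end TwoEdgeDisjointAux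

/-- In a finite connected simple graph `G`, vertices `x` and `y`
satisfy `x ~ y` (no single edge deletion separates them) iff there are two
edge-disjoint paths in `G` from `x` to `y`. -/
theorem same_component_iff_two_edge_disjoint_paths {V : Type*} [Fintype V]
    (G : SimpleGraph V) (hG : G.Connected) (x y : V) :
    (∀ e ∈ G.edgeSet, (G.deleteEdges {e}).Reachable x y) ↔
    ∃ (p q : G.Walk x y), p.IsPath ∧ q.IsPath ∧
      ∀ e : Sym2 V, e ∈ p.edges → e ∉ q.edges := by
  classical
  constructor
  · intro hyp
    obtain ⟨W1, W2, hdisj⟩ :=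
      TwoEdgeDisjointAux.key G hG (G.dist x y) x y le_rfl hyp
    exact ⟨W1.bypass, W2.bypass, SimpleGraph.Walk.bypass_isPath _,
      SimpleGraph.Walk.bypass_isPath _, fun e h1 h2 =>
        hdisj e (SimpleGraph.Walk.edges_bypass_subset _ h1)
          (SimpleGraph.Walk.edges_bypass_subset _ h2)⟩
  · rintro ⟨p, q, hp, hq, hdisj⟩ e he
    by_cases hep : e ∈ p.edges
    · refine ⟨q.transfer _ fun f hf => ?_⟩
      rw [SimpleGraph.edgeSet_deleteEdges]
      refine ⟨q.edges_subset_edgeSet hf, ?_⟩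
      simp only [Set.mem_singleton_iff]
      rintro rfl
      exact hdisj f hep hf
    · refine ⟨p.transfer _ fun f hf => ?_⟩
      rw [SimpleGraph.edgeSet_deleteEdges]
      refine ⟨p.edges_subset_edgeSet hf, ?_⟩
      simp only [Set.mem_singleton_iff]
      rintro rfl
      exact hep hf
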